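/- Let T be a tree on n ≥ 2 vertices. Then for any starting vertices u (cop) and v (robber) in the cop-and-drunk game on T, there is a cop strategy (the greedy strategy, which at each step moves along the unique path toward the robber's current position) whose expected capture time is at most n. -/

import Mathlib

open scoped Classical ENNReal

/-! ## The cop-and-drunk game

A cop starts at `u`, a robber at `v`.  In each move the cop steps to an adjacent vertex
(seeing everything), then the robber steps to a uniformly random adjacent vertex.
A cop strategy is a function assigning to each finite history of play (equivalently, to the
finite sequence of robber positions observed so far, which together with the strategy itself
determines the whole history) the cop's next vertex.  Capture occurs the first time the two
players occupy the same vertex, whether after the cop's step or after the robber's step, and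
the capture time is the index of that move.  The expected capture time is computed as
`∑_{k≥0} P(T > k)` in `ℝ≥0∞`, where the probability of a robber trajectory is the product of
the transition weights `1/deg` of the simple random walk (so non-walk trajectories get
weight `0`). -/

/-- The cop's position after move `k`, given strategy `σ`, starting vertex `u`, and the
robber's trajectory `r` (the strategy sees the history `r 0, …, r (k-1)`). -/
def copPos {V : Type} (σ : List V → V) (u : V) (r : ℕ → V) : ℕ → V
  | 0 => u
  | k + 1 => σ (List.ofFn fun i : Fin (k + 1) => r i)

/-- A strategy is valid for `G` if the cop always moves from her current vertex to an
adjacent vertex. -/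
def ValidStrategy {V : Type} (G : SimpleGraph V) (σ : List V → V) (u : V) : Prop :=
  ∀ (r : ℕ → V) (k : ℕ), G.Adj (copPos σ u r k) (copPos σ u r (k + 1))

/-- The robber following trajectory `r` has been captured by the end of move `k`
(including capture at time `0` in case the two players start on the same vertex):
at some move `j ≤ k`, either the cop stepped onto the robber's current vertex, or the
robber stepped onto the cop's vertex. -/
def CapturedBy {V : Type} (σ : List V → V) (u : V) (r : ℕ → V) (k : ℕ) : Prop :=
  r 0 = u ∨ ∃ j, 1 ≤ j ∧ j ≤ k ∧ (copPos σ u r j = r (j - 1) ∨ copPos σ u r j = r j)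

/-- Probability weight of the first `k` steps of the trajectory `r` for the simple random
walk on `G`: the product of `1/deg` over the steps, and `0` if some step is not an edge. -/
noncomputable def pathWt {V : Type} [Fintype V] (G : SimpleGraph V) (r : ℕ → V) (k : ℕ) :
    ℝ≥0∞ :=
  ∏ i ∈ Finset.range k, if G.Adj (r i) (r (i + 1)) then ((G.degree (r i) : ℝ≥0∞))⁻¹ else 0

/-- Extend a finite trajectory to an infinite one (constant after time `k`). -/
def pad {V : Type} (k : ℕ) (q : Fin (k + 1) → V) : ℕ → V :=
  fun i => q ⟨min i k, Nat.lt_succ_of_le (Nat.min_le_right i k)⟩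

/-- The probability that the robber, starting at `v` and performing a simple random walk on
`G`, survives (is not yet captured) through the end of move `k`, against the cop playing
strategy `σ` from `u`. -/
noncomputable def survival {V : Type} [Fintype V] (G : SimpleGraph V) (σ : List V → V)
    (u v : V) (k : ℕ) : ℝ≥0∞ :=
  ∑ q : Fin (k + 1) → V,
    if q 0 = v ∧ ¬ CapturedBy σ u (pad k q) k then pathWt G (pad k q) k else 0

/-- The expected capture time `E[T] = ∑_{k ≥ 0} P(T > k)` of the cop-and-drunk game on `G`,
with the cop starting at `u` playing strategy `σ` and the robber starting at `v`. -/
noncomputable def expCaptureTime {V : Type} [Fintype V] (G : SimpleGraph V) (σ : List V → V)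
    (u v : V) : ℝ≥0∞ :=
  ∑' k : ℕ, survival G σ u v k


namespace CopDrunk

variable {V : Type} (G : SimpleGraph V)

/-- In a connected graph, from `c ≠ t` there is a neighbor of `c` strictly closer to `t`. -/
lemma exists_toward (hconn : G.Connected) {c t : V} (h : c ≠ t) :
    ∃ c', G.Adj c c' ∧ G.dist c' t + 1 = G.dist c t := by
  have hd : G.dist c t ≠ 0 := by
    exact fun h0 => h (hconn.dist_eq_zero_iff.1 h0)
  obtain ⟨p, hp⟩ := SimpleGraph.exists_walk_of_dist_ne_zero hd
  cases p with
  | nil => exact absurd rfl h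
  | cons hadj q =>
    rename_i c'
    refine ⟨c', hadj, ?_⟩
    have h1 : G.dist c' t ≤ q.length := SimpleGraph.dist_le q
    have h2 : G.dist c t ≤ G.dist c c' + G.dist c' t := hconn.dist_triangle
    have h3 : G.dist c c' = 1 := SimpleGraph.dist_eq_one_iff_adj.2 hadj
    simp only [SimpleGraph.Walk.length_cons] at hp
    omega

/-- Step dichotomy in a tree: for an edge `a b`, distances to any `x` differ by exactly 1. -/
lemma dist_adj_cases (hconn : G.Connected) (hacyc : G.IsAcyclic) {a b : V}
    (hab : G.Adj a b) (x : V) :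
    G.dist a x = G.dist b x + 1 ∨ G.dist b x = G.dist a x + 1 := by
  obtain ⟨p, hp, hl⟩ := hconn.exists_path_of_dist b x
  by_cases hmem : a ∈ p.support
  · right
    have hspec := p.take_spec hmem
    have h1 : G.dist b a ≤ (p.takeUntil a hmem).length := SimpleGraph.dist_le _
    have h2 : G.dist a x ≤ (p.dropUntil a hmem).length := SimpleGraph.dist_le _
    have h3 : (p.takeUntil a hmem).length + (p.dropUntil a hmem).length = p.length := by
      rw [← SimpleGraph.Walk.length_append, hspec]
    have h4 : G.dist b x ≤ G.dist b a + G.dist a x := hconn.dist_triangle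
    have h5 : G.dist b a = 1 := SimpleGraph.dist_eq_one_iff_adj.2 hab.symm
    omega
  · left
    have hcons : (SimpleGraph.Walk.cons hab p).IsPath := hp.cons hmem
    obtain ⟨q, hq, hql⟩ := hconn.exists_path_of_dist a x
    have := hacyc.path_unique ⟨SimpleGraph.Walk.cons hab p, hcons⟩ ⟨q, hq⟩
    have hlen : (SimpleGraph.Walk.cons hab p).length = q.length :=
      congrArg (fun r : G.Path a x => r.1.length) this
    simp only [SimpleGraph.Walk.length_cons] at hlen
    omega

/-- In a tree, the neighbor strictly closer to `x` is unique. -/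
lemma toward_unique (hconn : G.Connected) (hacyc : G.IsAcyclic) {a x a₁ a₂ : V}
    (h₁ : G.Adj a a₁) (h₂ : G.Adj a a₂)
    (d₁ : G.dist a₁ x + 1 = G.dist a x) (d₂ : G.dist a₂ x + 1 = G.dist a x) : a₁ = a₂ := by
  obtain ⟨p₁, hp₁, hl₁⟩ := hconn.exists_path_of_dist a₁ x
  obtain ⟨p₂, hp₂, hl₂⟩ := hconn.exists_path_of_dist a₂ x
  have hm₁ : a ∉ p₁.support := by
    intro hmem
    have h2 : G.dist a x ≤ (p₁.dropUntil a hmem).length := SimpleGraph.dist_le _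
    have h3 : (p₁.takeUntil a hmem).length + (p₁.dropUntil a hmem).length = p₁.length := by
      rw [← SimpleGraph.Walk.length_append, p₁.take_spec hmem]
    have h4 : 0 < (p₁.takeUntil a hmem).length := by
      rcases Nat.eq_zero_or_pos (p₁.takeUntil a hmem).length with h | h
      · exfalso
        have := (SimpleGraph.Walk.eq_of_length_eq_zero h)
        exact h₁.ne this.symm
      · exact h
    omega
  have hm₂ : a ∉ p₂.support := by
    intro hmem
    have h2 : G.dist a x ≤ (p₂.dropUntil a hmem).length := SimpleGraph.dist_le _
    have h3 : (p₂.takeUntil a hmem).length + (p₂.dropUntil a hmem).length = p₂.length := by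
      rw [← SimpleGraph.Walk.length_append, p₂.take_spec hmem]
    have h4 : 0 < (p₂.takeUntil a hmem).length := by
      rcases Nat.eq_zero_or_pos (p₂.takeUntil a hmem).length with h | h
      · exfalso
        have := (SimpleGraph.Walk.eq_of_length_eq_zero h)
        exact h₂.ne this.symm
      · exact h
    omega
  have hq := hacyc.path_unique ⟨SimpleGraph.Walk.cons h₁ p₁, hp₁.cons hm₁⟩
    ⟨SimpleGraph.Walk.cons h₂ p₂, hp₂.cons hm₂⟩
  have hsupp : (SimpleGraph.Walk.cons h₁ p₁).support = (SimpleGraph.Walk.cons h₂ p₂).support :=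
    congrArg (fun r : G.Path a x => r.1.support) hq
  simp only [SimpleGraph.Walk.support_cons] at hsupp
  have e₁ := p₁.support_eq_cons
  have e₂ := p₂.support_eq_cons
  rw [e₁, e₂] at hsupp
  exact (List.cons.injEq _ _ _ _ ▸ (List.cons.injEq _ _ _ _ ▸ hsupp).2).1

/-- If `b` lies on a geodesic from `a` to `x` (and `b ≠ a`), then any neighbor of `a`
strictly closer to `x` is also strictly closer to `b`. -/
lemma toward_between (hconn : G.Connected) (hacyc : G.IsAcyclic) {a b x a' : V}
    (ha' : G.Adj a a') (hbx : G.dist a b + G.dist b x = G.dist a x) (hba : b ≠ a)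
    (hd : G.dist a' x + 1 = G.dist a x) : G.dist a' b + 1 = G.dist a b := by
  obtain ⟨a'', hadj'', hd''⟩ := exists_toward G hconn (Ne.symm hba)
  have h1 : G.dist a'' x ≤ G.dist a'' b + G.dist b x := hconn.dist_triangle
  have h2 : G.dist a x ≤ G.dist a a'' + G.dist a'' x := hconn.dist_triangle
  have h3 : G.dist a a'' = 1 := SimpleGraph.dist_eq_one_iff_adj.2 hadj''
  have hdx : G.dist a'' x + 1 = G.dist a x := by omega
  have : a' = a'' := toward_unique G hconn hacyc ha' hadj'' hd hdx
  rw [this]; exact hd''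

end CopDrunk

namespace CopDrunk

section Terr

variable {V : Type} [Fintype V] (G : SimpleGraph V)

/-- The robber's territory: vertices `x` such that the cop's position `c` is not on the
geodesic from the robber's position `r` to `x`. -/
noncomputable def terr (c r : V) : Finset V :=
  Finset.univ.filter (fun x => G.dist r x < G.dist r c + G.dist c x)

lemma not_mem_terr_self (c r : V) : c ∉ terr G c r := by
  simp [terr, SimpleGraph.dist_self]

lemma mem_terr_iff (hconn : G.Connected) {c r x : V} :
    x ∈ terr G c r ↔ G.dist r x ≠ G.dist r c + G.dist c x := by
  have h : G.dist r x ≤ G.dist r c + G.dist c x := hconn.dist_triangle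
  simp only [terr, Finset.mem_filter, Finset.mem_univ, true_and]
  omega

lemma robber_mem_terr (hconn : G.Connected) {c r : V} (h : c ≠ r) : r ∈ terr G c r := by
  have hd : G.dist r c ≠ 0 := fun h0 => h (hconn.dist_eq_zero_iff.1 h0).symm
  simp only [terr, Finset.mem_filter, Finset.mem_univ, true_and, SimpleGraph.dist_self]
  have := hconn.dist_triangle (u := c) (v := r) (w := r)
  omega

/-- Main territory-shrinking lemma. -/
lemma terr_step (hconn : G.Connected) (hacyc : G.IsAcyclic) {c r c' r' : V}
    (hcr : c ≠ r) (hadjc : G.Adj c c') (hstep : G.dist c' r + 1 = G.dist c r)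
    (hc'r : c' ≠ r) (hadjr : G.Adj r r') (hr'c' : r' ≠ c') :
    terr G c' r' ⊆ (terr G c r).erase c' := by
  intro x hx
  rw [Finset.mem_erase]
  constructor
  · rintro rfl
    exact (not_mem_terr_self G x r') hx
  · rw [mem_terr_iff G hconn] at hx ⊢
    intro hB
    apply hx
    -- `c` is on the geodesic from `r` to `x`; derive that `c'` is too.
    have hcc' : G.dist c c' = 1 := SimpleGraph.dist_eq_one_iff_adj.2 hadjc
    have hrc' : G.dist r c' + 1 = G.dist r c := by
      rw [SimpleGraph.dist_comm (u := r) (v := c'), SimpleGraph.dist_comm (u := r) (v := c)]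
      exact hstep
    have t1 : G.dist c' x ≤ G.dist c' c + G.dist c x := hconn.dist_triangle
    have t2 : G.dist r x ≤ G.dist r c' + G.dist c' x := hconn.dist_triangle
    have hc'c : G.dist c' c = 1 := SimpleGraph.dist_eq_one_iff_adj.2 hadjc.symm
    have hBc' : G.dist r c' + G.dist c' x = G.dist r x := by omega
    have hc'x : G.dist c' x = 1 + G.dist c x := by omega
    -- now the case analysis on the robber's move
    rcases dist_adj_cases G hconn hacyc hadjr x with hX | hX
    · -- r' is strictly closer to x
      have hd : G.dist r' x + 1 = G.dist r x := by omega
      have := toward_between G hconn hacyc hadjr hBc' hc'r hd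
      -- dist r' c' + 1 = dist r c'
      omega
    · -- r' is strictly farther from x
      rcases dist_adj_cases G hconn hacyc hadjr c' with hC | hC
      · -- r' strictly closer to c' : contradiction
        exfalso
        have t3 : G.dist r' x ≤ G.dist r' c' + G.dist c' x := hconn.dist_triangle
        omega
      · omega

lemma terr_card_step (hconn : G.Connected) (hacyc : G.IsAcyclic) {c r c' r' : V}
    (hcr : c ≠ r) (hadjc : G.Adj c c') (hstep : G.dist c' r + 1 = G.dist c r)
    (hc'r : c' ≠ r) (hadjr : G.Adj r r') (hr'c' : r' ≠ c') :
    (terr G c' r').card + 1 ≤ (terr G c r).card := by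
  have hc'mem : c' ∈ terr G c r := by
    rw [mem_terr_iff G hconn]
    have hcc' : G.dist c c' = 1 := SimpleGraph.dist_eq_one_iff_adj.2 hadjc
    have hrc' : G.dist r c' + 1 = G.dist r c := by
      rw [SimpleGraph.dist_comm (u := r) (v := c'), SimpleGraph.dist_comm (u := r) (v := c)]
      exact hstep
    omega
  have hsub := terr_step G hconn hacyc hcr hadjc hstep hc'r hadjr hr'c'
  have h1 : (terr G c' r').card ≤ ((terr G c r).erase c').card := Finset.card_le_card hsub
  rw [Finset.card_erase_of_mem hc'mem] at h1
  have : 0 < (terr G c r).card := Finset.card_pos.2 ⟨c', hc'mem⟩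
  omega

lemma terr_card_le (c r : V) : (terr G c r).card ≤ Fintype.card V - 1 := by
  have h : terr G c r ⊆ Finset.univ.erase c := by
    intro x hx
    rw [Finset.mem_erase]
    refine ⟨?_, Finset.mem_univ x⟩
    rintro rfl
    exact not_mem_terr_self G x r hx
  have := Finset.card_le_card h
  rwa [Finset.card_erase_of_mem (Finset.mem_univ c), Finset.card_univ] at this

end Terr

end CopDrunk


namespace CopDrunk

section Game

variable {V : Type} [Fintype V] (G : SimpleGraph V)

noncomputable def gStep (hconn : G.Connected) (hV : 1 < Fintype.card V) (c t : V) : V :=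
  if h : c = t then
    Classical.choose (exists_toward G hconn
      (Ne.symm (Classical.choose_spec (Fintype.exists_ne_of_one_lt_card hV c))))
  else Classical.choose (exists_toward G hconn h)

lemma gStep_adj (hconn : G.Connected) (hV : 1 < Fintype.card V) (c t : V) :
    G.Adj c (gStep G hconn hV c t) := by
  unfold gStep
  split
  · exact (Classical.choose_spec (exists_toward G hconn
      (Ne.symm (Classical.choose_spec (Fintype.exists_ne_of_one_lt_card hV c))))).1
  · next h => exact (Classical.choose_spec (exists_toward G hconn h)).1

lemma gStep_dist (hconn : G.Connected) (hV : 1 < Fintype.card V) {c t : V} (h : c ≠ t) :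
    G.dist (gStep G hconn hV c t) t + 1 = G.dist c t := by
  unfold gStep
  rw [dif_neg h]
  exact (Classical.choose_spec (exists_toward G hconn h)).2

noncomputable def gFold (hconn : G.Connected) (hV : 1 < Fintype.card V) (u : V) :
    List V → V
  | [] => u
  | x :: l => gStep G hconn hV (gFold hconn hV u l) x

noncomputable def gσ (hconn : G.Connected) (hV : 1 < Fintype.card V) (u : V)
    (l : List V) : V :=
  gFold G hconn hV u l.reverse

lemma copPos_g (hconn : G.Connected) (hV : 1 < Fintype.card V) (u : V) (r : ℕ → V) :
    ∀ k, copPos (gσ G hconn hV u) u r k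
      = gFold G hconn hV u (List.ofFn fun i : Fin k => r i).reverse
  | 0 => rfl
  | (k + 1) => rfl

lemma copPos_succ (hconn : G.Connected) (hV : 1 < Fintype.card V) (u : V) (r : ℕ → V)
    (k : ℕ) :
    copPos (gσ G hconn hV u) u r (k + 1)
      = gStep G hconn hV (copPos (gσ G hconn hV u) u r k) (r k) := by
  rw [copPos_g, copPos_g, List.ofFn_succ']
  rw [List.concat_eq_append, List.reverse_concat']
  simp only [Fin.coe_castSucc, Fin.val_last]
  rfl

lemma gσ_valid (hconn : G.Connected) (hV : 1 < Fintype.card V) (u : V) :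
    ValidStrategy G (gσ G hconn hV u) u := by
  intro r k
  rw [copPos_succ]
  exact gStep_adj G hconn hV _ _

/-- The greedy cop deterministically captures any (adjacency-respecting) robber trajectory
within `card V - 1` moves. -/
lemma captured (hconn : G.Connected) (hacyc : G.IsAcyclic) (hV : 1 < Fintype.card V)
    (u : V) (r : ℕ → V)
    (hadj : ∀ i, i + 1 ≤ Fintype.card V - 1 → G.Adj (r i) (r (i + 1))) :
    CapturedBy (gσ G hconn hV u) u r (Fintype.card V - 1) := by
  set m := Fintype.card V - 1 with hm
  by_contra hcap
  rw [CapturedBy] at hcap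
  push_neg at hcap
  obtain ⟨h0, hj⟩ := hcap
  have key : ∀ j, j ≤ m → copPos (gσ G hconn hV u) u r j ≠ r j ∧
      (terr G (copPos (gσ G hconn hV u) u r j) (r j)).card + j ≤ m := by
    intro j
    induction j with
    | zero =>
      intro _
      refine ⟨fun h => h0 h.symm, ?_⟩
      exact terr_card_le G u (r 0)
    | succ j ih =>
      intro hjm
      obtain ⟨hne, hcard⟩ := ih (by omega)
      have hcap1 := hj (j + 1) (by omega) hjm
      have hrec := copPos_succ G hconn hV u r j
      have hc'r : copPos (gσ G hconn hV u) u r (j + 1) ≠ r j := by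
        have := hcap1.1
        simpa using this
      refine ⟨hcap1.2, ?_⟩
      have hstep : G.dist (copPos (gσ G hconn hV u) u r (j + 1)) (r j) + 1
          = G.dist (copPos (gσ G hconn hV u) u r j) (r j) := by
        rw [hrec]; exact gStep_dist G hconn hV hne
      have hadjc : G.Adj (copPos (gσ G hconn hV u) u r j)
          (copPos (gσ G hconn hV u) u r (j + 1)) := by
        rw [hrec]; exact gStep_adj G hconn hV _ _
      have h1 := terr_card_step G hconn hacyc hne hadjc hstep hc'r
        (hadj j hjm) (Ne.symm hcap1.2)
      omega
  obtain ⟨hne, hcard⟩ := key m le_rfl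
  have hmem := robber_mem_terr G hconn hne
  have : 0 < (terr G (copPos (gσ G hconn hV u) u r m) (r m)).card :=
    Finset.card_pos.2 ⟨_, hmem⟩
  omega

end Game

end CopDrunk


namespace CopDrunk

section Prob

variable {V : Type} [Fintype V] (G : SimpleGraph V)

lemma pad_eq (k : ℕ) (q : Fin (k + 1) → V) (i : ℕ) (h : i ≤ k) :
    pad k q i = q ⟨i, Nat.lt_succ_of_le h⟩ := by
  unfold pad
  congr 1
  exact Fin.ext (Nat.min_eq_left h)

lemma sum_ite_const {α M : Type*} [Fintype α] [AddCommMonoid M] (P : Prop) [Decidable P]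
    (f : α → M) : (∑ a : α, if P then f a else 0) = if P then ∑ a, f a else 0 := by
  split <;> simp

lemma sum_ite_adj (hdeg : ∀ a : V, 0 < G.degree a) (a : V) :
    ∑ y : V, (if G.Adj a y then ((G.degree a : ℝ≥0∞))⁻¹ else 0) = 1 := by
  rw [Finset.sum_ite, Finset.sum_const, Finset.sum_const_zero, add_zero]
  have hfil : Finset.univ.filter (fun y => G.Adj a y) = G.neighborFinset a := by
    ext y; simp [SimpleGraph.neighborFinset]
  rw [hfil, SimpleGraph.card_neighborFinset_eq_degree, nsmul_eq_mul]
  exact ENNReal.mul_inv_cancel (by exact_mod_cast (hdeg a).ne') (ENNReal.natCast_ne_top _)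

lemma pathWt_cons (k : ℕ) (x : V) (p : Fin (k + 1) → V) :
    pathWt G (pad (k + 1) (Fin.cons x p)) (k + 1)
      = (if G.Adj x (p 0) then ((G.degree x : ℝ≥0∞))⁻¹ else 0) * pathWt G (pad k p) k := by
  have e0 : pad (k + 1) (Fin.cons x p) 0 = x := by
    rw [pad_eq (k + 1) _ 0 (by omega)]
    rfl
  have e1 : pad (k + 1) (Fin.cons x p) 1 = p 0 := by
    rw [pad_eq (k + 1) _ 1 (by omega)]
    rfl
  have es : ∀ i : ℕ, i < k → pad (k + 1) (Fin.cons x p) (i + 1) = pad k p i := by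
    intro i hi
    rw [pad_eq (k + 1) _ (i + 1) (by omega), pad_eq k p i (by omega)]
    rfl
  unfold pathWt
  rw [Finset.prod_range_succ']
  have hprod : (∏ i ∈ Finset.range k,
      if G.Adj (pad (k + 1) (Fin.cons x p) (i + 1)) (pad (k + 1) (Fin.cons x p) (i + 1 + 1))
      then ((G.degree (pad (k + 1) (Fin.cons x p) (i + 1)) : ℝ≥0∞))⁻¹ else 0)
      = ∏ i ∈ Finset.range k,
        if G.Adj (pad k p i) (pad k p (i + 1))
        then ((G.degree (pad k p i) : ℝ≥0∞))⁻¹ else 0 := by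
    apply Finset.prod_congr rfl
    intro i hi
    rw [Finset.mem_range] at hi
    rcases Nat.lt_or_ge (i + 1) k with h | h
    · rw [es i hi, es (i + 1) h]
    · have hik : i + 1 = k := by omega
      rw [es i hi]
      have : pad (k + 1) (Fin.cons x p) (i + 1 + 1) = pad k p (i + 1) := by
        rw [pad_eq (k + 1) _ (i + 1 + 1) (by omega), pad_eq k p (i + 1) (by omega)]
        rfl
      rw [this]
  have hf0 : (if G.Adj (pad (k + 1) (Fin.cons x p) 0) (pad (k + 1) (Fin.cons x p) (0 + 1))
      then ((G.degree (pad (k + 1) (Fin.cons x p) 0) : ℝ≥0∞))⁻¹ else 0)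
      = if G.Adj x (p 0) then ((G.degree x : ℝ≥0∞))⁻¹ else 0 := by
    have : (0 : ℕ) + 1 = 1 := rfl
    rw [this, e0, e1]
  rw [hprod, hf0, mul_comm]

lemma sum_pathWt (hdeg : ∀ a : V, 0 < G.degree a) :
    ∀ (k : ℕ) (v : V),
      (∑ q : Fin (k + 1) → V, if q 0 = v then pathWt G (pad k q) k else 0) = 1 := by
  intro k
  induction k with
  | zero =>
    intro v
    rw [← Equiv.sum_comp (Equiv.funUnique (Fin 1) V).symm
      (fun q => if q 0 = v then pathWt G (pad 0 q) 0 else 0)]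
    have : ∀ x : V, ((Equiv.funUnique (Fin 1) V).symm x) 0 = x := fun _ => rfl
    simp only [this]
    have hwt : ∀ x : V, pathWt G (pad 0 ((Equiv.funUnique (Fin 1) V).symm x)) 0 = 1 := by
      intro x; unfold pathWt; exact Finset.prod_range_zero _
    simp only [hwt]
    simp
  | succ k ih =>
    intro v
    rw [← Equiv.sum_comp (Fin.consEquiv fun _ : Fin (k + 2) => V)
      (fun q => if q 0 = v then pathWt G (pad (k + 1) q) (k + 1) else 0),
      Fintype.sum_prod_type]
    have hred : ∀ (x : V) (p : Fin (k + 1) → V),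
        (if (Fin.consEquiv fun _ : Fin (k + 2) => V) (x, p) 0 = v
          then pathWt G (pad (k + 1) ((Fin.consEquiv fun _ : Fin (k + 2) => V) (x, p))) (k + 1)
          else 0)
        = if x = v then
            (if G.Adj x (p 0) then ((G.degree x : ℝ≥0∞))⁻¹ else 0) * pathWt G (pad k p) k
          else 0 := by
      intro x p
      have hc : (Fin.consEquiv fun _ : Fin (k + 2) => V) (x, p) = Fin.cons x p := rfl
      rw [hc, pathWt_cons, Fin.cons_zero]
    simp only [hred]
    simp only [sum_ite_const]
    rw [Finset.sum_ite_eq' Finset.univ v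
      (fun x => ∑ p : Fin (k + 1) → V,
        (if G.Adj x (p 0) then ((G.degree x : ℝ≥0∞))⁻¹ else 0) * pathWt G (pad k p) k),
      if_pos (Finset.mem_univ v)]
    have hins : ∀ p : Fin (k + 1) → V,
        (if G.Adj v (p 0) then ((G.degree v : ℝ≥0∞))⁻¹ else 0) * pathWt G (pad k p) k
        = ∑ y : V, (if G.Adj v y then ((G.degree v : ℝ≥0∞))⁻¹ else 0) *
            (if p 0 = y then pathWt G (pad k p) k else 0) := by
      intro p
      have := Finset.sum_ite_eq Finset.univ (p 0)
        (fun y => (if G.Adj v y then ((G.degree v : ℝ≥0∞))⁻¹ else 0) * pathWt G (pad k p) k)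
      rw [if_pos (Finset.mem_univ _)] at this
      rw [← this]
      apply Finset.sum_congr rfl
      intro y _
      split <;> simp_all
    simp only [hins]
    rw [Finset.sum_comm]
    have hcol : ∀ y : V,
        (∑ p : Fin (k + 1) → V, (if G.Adj v y then ((G.degree v : ℝ≥0∞))⁻¹ else 0) *
            (if p 0 = y then pathWt G (pad k p) k else 0))
        = (if G.Adj v y then ((G.degree v : ℝ≥0∞))⁻¹ else 0) := by
      intro y
      rw [← Finset.mul_sum, ih y, mul_one]
    simp only [hcol]
    exact sum_ite_adj G hdeg v

end Prob

end CopDrunk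


namespace CopDrunk

section Surv

variable {V : Type} [Fintype V] (G : SimpleGraph V)

lemma survival_le_one (hdeg : ∀ a : V, 0 < G.degree a) (σ : List V → V) (u v : V) (k : ℕ) :
    survival G σ u v k ≤ 1 := by
  rw [survival, ← sum_pathWt G hdeg k v]
  apply Finset.sum_le_sum
  intro q _
  by_cases h : q 0 = v ∧ ¬ CapturedBy σ u (pad k q) k
  · rw [if_pos h, if_pos h.1]
  · rw [if_neg h]
    exact zero_le

lemma survival_eq_zero (hconn : G.Connected) (hacyc : G.IsAcyclic)
    (hV : 1 < Fintype.card V) (u v : V) {k : ℕ} (hk : Fintype.card V - 1 ≤ k) :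
    survival G (gσ G hconn hV u) u v k = 0 := by
  rw [survival]
  apply Finset.sum_eq_zero
  intro q _
  by_cases h : q 0 = v ∧ ¬ CapturedBy (gσ G hconn hV u) u (pad k q) k
  · rw [if_pos h]
    obtain ⟨h0, hcap⟩ := h
    by_contra hw
    apply hcap
    have hadj : ∀ i, i < k → G.Adj (pad k q i) (pad k q (i + 1)) := by
      intro i hi
      by_contra hni
      apply hw
      rw [pathWt]
      apply Finset.prod_eq_zero (Finset.mem_range.2 hi)
      rw [if_neg hni]
    have hcapm := captured G hconn hacyc hV u (pad k q)
      (fun i hi => hadj i (by omega))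
    rcases hcapm with h | ⟨j, hj1, hjm, hj⟩
    · exact Or.inl h
    · exact Or.inr ⟨j, hj1, le_trans hjm hk, hj⟩
  · rw [if_neg h]

end Surv

end CopDrunk

/-- On a tree on `n ≥ 2` vertices, for any starting vertices `u` (cop) and `v` (robber),
there is a valid cop strategy (the greedy one) whose expected capture time is at most `n`. -/
theorem tree_expected_capture_time_le {V : Type} [Fintype V] (G : SimpleGraph V) (n : ℕ)
    (hn : 2 ≤ n) (hcard : Fintype.card V = n) (hconn : G.Connected) (hacyc : G.IsAcyclic)
    (u v : V) :
    ∃ σ : List V → V, ValidStrategy G σ u ∧ expCaptureTime G σ u v ≤ (n : ℝ≥0∞) := by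
  have hV : 1 < Fintype.card V := by omega
  refine ⟨CopDrunk.gσ G hconn hV u, CopDrunk.gσ_valid G hconn hV u, ?_⟩
  have hdeg : ∀ a : V, 0 < G.degree a := by
    intro a
    rw [SimpleGraph.degree_pos_iff_exists_adj]
    obtain ⟨b, hb⟩ := Fintype.exists_ne_of_one_lt_card hV a
    obtain ⟨c', h, -⟩ := CopDrunk.exists_toward G hconn (Ne.symm hb)
    exact ⟨c', h⟩
  rw [expCaptureTime]
  rw [tsum_eq_sum (s := Finset.range (Fintype.card V - 1))
    (fun k hk => CopDrunk.survival_eq_zero G hconn hacyc hV u v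
      (by rw [Finset.mem_range] at hk; omega))]
  calc ∑ k ∈ Finset.range (Fintype.card V - 1), survival G (CopDrunk.gσ G hconn hV u) u v k
      ≤ ∑ _k ∈ Finset.range (Fintype.card V - 1), (1 : ℝ≥0∞) :=
        Finset.sum_le_sum fun k _ => CopDrunk.survival_le_one G hdeg _ u v k
    _ = ((Fintype.card V - 1 : ℕ) : ℝ≥0∞) := by simp
    _ ≤ (n : ℝ≥0∞) := by
        rw [Nat.cast_le]
        omega
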